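/- Let X be a real normed vector space, let K ⊆ X be a convex set, and let A : X → X* be a map into the continuous dual of X such that: (i) A is monotone on K, i.e. (A(v) − A(w))(v − w) ≥ 0 for all v, w ∈ K; and (ii) A is hemicontinuous along segments in K, i.e. for all v, w ∈ K the map t ↦ A(v + t·(w − v))(w − v) is continuous on the interval [0,1]. Then, for u ∈ K, the following are equivalent: (a) A(u)(v − u) ≥ 0 for all v ∈ K; (b) A(v)(v − u) ≥ 0 for all v ∈ K. -/
import Mathlib


/-- Minty's Lemma (Lemma 4.2): for a monotone operator `A : X → X*` that is
hemicontinuous along segments in a convex set `K`, the variational inequality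
`A(u)(v - u) ≥ 0` on `K` is equivalent to its Minty form `A(v)(v - u) ≥ 0`. -/
theorem minty_lemma
    {X : Type*} [NormedAddCommGroup X] [NormedSpace ℝ X]
    (K : Set X) (hK : Convex ℝ K)
    (A : X → (X →L[ℝ] ℝ))
    (hmono : ∀ v ∈ K, ∀ w ∈ K, 0 ≤ (A v - A w) (v - w))
    (hhemi : ∀ v ∈ K, ∀ w ∈ K,
      ContinuousOn (fun t : ℝ => A (v + t • (w - v)) (w - v)) (Set.Icc (0 : ℝ) 1))
    (u : X) (hu : u ∈ K) :
    (∀ v ∈ K, 0 ≤ A u (v - u)) ↔ (∀ v ∈ K, 0 ≤ A v (v - u)) := by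
  constructor
  · intro h v hv
    have h1 := hmono v hv u hu
    have h2 := h v hv
    simp only [ContinuousLinearMap.sub_apply] at h1
    linarith [h1, h2]
  · intro h v hv
    set f : ℝ → ℝ := fun t : ℝ => A (u + t • (v - u)) (v - u) with hf
    have hcont : ContinuousOn f (Set.Icc (0 : ℝ) 1) := hhemi u hu v hv
    have hpos : ∀ t ∈ Set.Ioc (0 : ℝ) 1, 0 ≤ f t := by
      intro t ht
      have hmem : u + t • (v - u) ∈ K := by
        have := hK hu hv (by linarith [ht.1.le, ht.2] : (0:ℝ) ≤ 1 - t) ht.1.le (by ring)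
        convert this using 1
        module
      have := h _ hmem
      have heq : (u + t • (v - u)) - u = t • (v - u) := by module
      rw [heq, map_smul] at this
      have := nonneg_of_mul_nonneg_right (by simpa [smul_eq_mul] using this) ht.1
      simpa [hf]
    have htend : Filter.Tendsto f (nhdsWithin 0 (Set.Icc (0:ℝ) 1)) (nhds (f 0)) :=
      hcont 0 (by norm_num)
    have hle : nhdsWithin (0:ℝ) (Set.Ioc 0 1) ≤ nhdsWithin 0 (Set.Icc (0:ℝ) 1) :=
      nhdsWithin_mono _ Set.Ioc_subset_Icc_self
    have hne : (nhdsWithin (0:ℝ) (Set.Ioc 0 1)).NeBot := by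
      apply mem_closure_iff_nhdsWithin_neBot.mp
      rw [closure_Ioc (by norm_num : (0:ℝ) ≠ 1)]
      exact Set.left_mem_Icc.mpr (by norm_num)
    have h0 : 0 ≤ f 0 :=
      ge_of_tendsto (htend.mono_left hle)
        (eventually_nhdsWithin_of_forall hpos)
    simpa [hf] using h0
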